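/- Let f : ℝ₊ → ℝ₊ be a (δ,C,s)-decent function for some constants δ ∈ (0,1), C ≥ 1, s ≥ 2, let c > 0 be a constant, and for every n ∈ ℕ let Mₙ be a set of (c·f)-good n-vertex graphs with |Mₙ| ≤ ⌈2^{√(n·f(n))}⌉ (counting isomorphism classes). Then the monotone closure 𝒳 = Mon(∪ₙ Mₙ), the smallest subgraph-closed class containing all graphs in all Mₙ, satisfies |𝒳ₙ| ≤ 2^{K·n·f(n)} for some constant K and all sufficiently large n; i.e., 𝒳 has speed 2^{O(n·f(n))}. -/

import Mathlib

open Real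

/-- A graph class: for each `n`, the set of its member graphs with vertex set `Fin n`. -/
abbrev GraphClass := (n : ℕ) → Set (SimpleGraph (Fin n))

/-- `H` is (isomorphic to) a subgraph of `G`: there is an injective map of the vertices
of `H` into the vertices of `G` sending edges to edges. -/
def IsSubgraphOf {m n : ℕ} (H : SimpleGraph (Fin m)) (G : SimpleGraph (Fin n)) : Prop :=
  ∃ f : Fin m ↪ Fin n, ∀ u v : Fin m, H.Adj u v → G.Adj (f u) (f v)

/-- A graph class is monotone if it is closed under taking subgraphs. -/
def MonotoneGraphClass (𝒳 : GraphClass) : Prop :=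
  ∀ {m n : ℕ} (H : SimpleGraph (Fin m)) (G : SimpleGraph (Fin n)),
    G ∈ 𝒳 n → IsSubgraphOf H G → H ∈ 𝒳 m

/-- A non-decreasing function `f : ℝ₊ → ℝ₊` is `(δ, C, s)`-decent (for `δ ∈ (0,1)`,
`C ≥ 1`, `s ≥ 2`) if `log₂ x ≤ f x ≤ C * x ^ (1 - δ)` for all `x ≥ s` (moderate growth)
and `f (x * y) ≤ C * f x * f y` for all `x, y ≥ s` (sub-multiplicativity). -/
def Decent (δ C s : ℝ) (f : ℝ → ℝ) : Prop :=
  (0 < δ ∧ δ < 1) ∧ 1 ≤ C ∧ 2 ≤ s ∧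
  (∀ x : ℝ, 0 ≤ x → 0 ≤ f x) ∧
  (∀ x y : ℝ, 0 ≤ x → x ≤ y → f x ≤ f y) ∧
  (∀ x : ℝ, s ≤ x → Real.logb 2 x ≤ f x ∧ f x ≤ C * x ^ (1 - δ)) ∧
  (∀ x y : ℝ, s ≤ x → s ≤ y → f (x * y) ≤ C * f x * f y)

/-- The number of edges of `G` with both endpoints in `A`. -/
noncomputable def edgesWithin {n : ℕ} (G : SimpleGraph (Fin n)) (A : Finset (Fin n)) : ℕ :=
  {e ∈ G.edgeSet | ∀ v ∈ e, v ∈ A}.ncard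

/-- An `n`-vertex graph `G` is `f`-good if every subgraph on `k ≥ 2` vertices has at most
`k * f k / log₂ k` edges when `k ≤ √n`, and at most `k * f k` edges when `√n < k ≤ n`. -/
def IsGood (f : ℝ → ℝ) {n : ℕ} (G : SimpleGraph (Fin n)) : Prop :=
  ∀ A : Finset (Fin n), 2 ≤ A.card →
    ((A.card : ℝ) ≤ Real.sqrt n →
      (edgesWithin G A : ℝ) ≤ A.card * f A.card / Real.logb 2 A.card) ∧
    (Real.sqrt n < (A.card : ℝ) →
      (edgesWithin G A : ℝ) ≤ A.card * f A.card)

/-- The monotone closure of a family of graphs: the smallest subgraph-closed class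
containing, for every `n`, all graphs of `M n`. -/
def MonClosure (M : GraphClass) : GraphClass :=
  fun _m => {H | ∃ n : ℕ, ∃ G ∈ M n, IsSubgraphOf H G}

/-! Auxiliary lemmas -/

lemma ncard_biUnion_le' {α ι : Type*} [Finite α] (s : Finset ι) (t : ι → Set α) :
    (⋃ i ∈ s, t i).ncard ≤ ∑ i ∈ s, (t i).ncard := by
  classical
  induction s using Finset.induction_on with
  | empty => simp
  | insert _ _ ha ih =>
    rw [Finset.set_biUnion_insert, Finset.sum_insert ha]
    exact (Set.ncard_union_le _ _).trans (Nat.add_le_add_left ih _)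

lemma edge_count_le {n N : ℕ} (H : SimpleGraph (Fin n)) (G : SimpleGraph (Fin N))
    (φ : Fin n ↪ Fin N) (hφ : ∀ u v, H.Adj u v → G.Adj (φ u) (φ v)) :
    H.edgeSet.ncard ≤ edgesWithin G (Finset.univ.map φ) := by
  rw [edgesWithin, ← Set.ncard_image_of_injective H.edgeSet (Sym2.map.injective φ.injective)]
  apply Set.ncard_le_ncard _ (Set.toFinite _)
  rintro e ⟨e', he', rfl⟩
  induction e' with
  | h u v =>
    refine ⟨hφ u v he', ?_⟩
    intro w hw
    rw [Sym2.map_pair_eq, Sym2.mem_iff] at hw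
    rcases hw with h | h <;> subst h <;> exact Finset.mem_map_of_mem φ (Finset.mem_univ _)

lemma ncard_subgraphs_le {n : ℕ} (P : SimpleGraph (Fin n)) :
    {H : SimpleGraph (Fin n) | H ≤ P}.ncard ≤ 2 ^ P.edgeSet.ncard := by
  classical
  rw [Set.ncard_eq_toFinset_card']
  have h : P.edgeSet.ncard = P.edgeFinset.card := by
    rw [Set.ncard_eq_toFinset_card']
    congr 1
  rw [h, ← Finset.card_powerset]
  apply Finset.card_le_card_of_injOn (fun H => H.edgeFinset)
  · intro H hH
    simp only [Finset.mem_coe, Set.mem_toFinset, Set.mem_setOf_eq] at hH ⊢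
    exact Finset.mem_powerset.mpr (SimpleGraph.edgeFinset_mono hH)
  · intro H₁ _ H₂ _ hEq
    apply SimpleGraph.edgeSet_injective
    simp only at hEq
    rw [← SimpleGraph.coe_edgeFinset, hEq, SimpleGraph.coe_edgeFinset]

lemma card_sym2_le (n : ℕ) : Fintype.card (Sym2 (Fin n)) ≤ n ^ 2 := by
  have hs : Function.Surjective (fun p : Fin n × Fin n => s(p.1, p.2)) := by
    intro e
    induction e with
    | h u v => exact ⟨(u, v), rfl⟩
  calc Fintype.card (Sym2 (Fin n)) ≤ Fintype.card (Fin n × Fin n) :=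
        Fintype.card_le_of_surjective _ hs
    _ = n ^ 2 := by simp [sq]

/-- counting graphs with few edges -/
lemma ncard_sparse_le (n m : ℕ) (hn : 0 < n) :
    {H : SimpleGraph (Fin n) | H.edgeSet.ncard ≤ m}.ncard ≤ (m + 1) * (n ^ 2) ^ m := by
  classical
  rw [Set.ncard_eq_toFinset_card']
  have hcard : ∀ H : SimpleGraph (Fin n), H.edgeSet.ncard = H.edgeFinset.card := by
    intro H; rw [Set.ncard_eq_toFinset_card']
    congr 1
  set B : Finset (Finset (Sym2 (Fin n))) :=
    (Finset.range (m + 1)).biUnion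
      (fun i => (Finset.univ : Finset (Sym2 (Fin n))).powersetCard i) with hB
  have h1 : {H : SimpleGraph (Fin n) | H.edgeSet.ncard ≤ m}.toFinset.card ≤ B.card := by
    apply Finset.card_le_card_of_injOn (fun H => H.edgeFinset)
    · intro H hH
      simp only [Finset.mem_coe, Set.mem_toFinset, Set.mem_setOf_eq] at hH ⊢
      apply Finset.mem_biUnion.mpr
      refine ⟨H.edgeFinset.card, ?_, ?_⟩
      · rw [Finset.mem_range, ← hcard]
        omega
      · exact Finset.mem_powersetCard.mpr ⟨Finset.subset_univ _, rfl⟩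
    · intro H₁ _ H₂ _ hEq
      apply SimpleGraph.edgeSet_injective
      simp only at hEq
      rw [← SimpleGraph.coe_edgeFinset, hEq, SimpleGraph.coe_edgeFinset]
  refine h1.trans ?_
  calc B.card ≤ ∑ i ∈ Finset.range (m + 1),
        ((Finset.univ : Finset (Sym2 (Fin n))).powersetCard i).card :=
        Finset.card_biUnion_le
    _ ≤ ∑ _i ∈ Finset.range (m + 1), (n ^ 2) ^ m := by
        apply Finset.sum_le_sum
        intro i hi
        rw [Finset.card_powersetCard, Finset.card_univ]
        calc (Fintype.card (Sym2 (Fin n))).choose i ≤ (Fintype.card (Sym2 (Fin n))) ^ i :=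
              Nat.choose_le_pow _ _
          _ ≤ (n ^ 2) ^ i := Nat.pow_le_pow_left (card_sym2_le n) i
          _ ≤ (n ^ 2) ^ m := Nat.pow_le_pow_right (pow_pos hn 2) (by
              rw [Finset.mem_range] at hi; omega)
    _ = (m + 1) * (n ^ 2) ^ m := by
        rw [Finset.sum_const, Finset.card_range, smul_eq_mul]

set_option maxHeartbeats 2000000 in
/-- Let `f` be `(δ, C, s)`-decent, `c > 0` a constant, and for each `n`
let `M n` be a set of `(c * f)`-good `n`-vertex graphs consisting of at most
`⌈2 ^ √(n * f n)⌉` isomorphism classes. Then the monotone closure `Mon(∪ₙ M n)` has speed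
at most `2 ^ (K * n * f n)` for some constant `K` and all sufficiently large `n`. -/
theorem monClosure_of_good_speed (f : ℝ → ℝ) (δ C s : ℝ) (hf : Decent δ C s f)
    (c : ℝ) (hc : 0 < c) (M : GraphClass)
    (hgood : ∀ n : ℕ, ∀ G ∈ M n, IsGood (fun x => c * f x) G)
    (hcard : ∀ n : ℕ, ∃ R : Set (SimpleGraph (Fin n)),
      R.ncard ≤ ⌈(2 : ℝ) ^ Real.sqrt ((n : ℝ) * f n)⌉₊ ∧
      ∀ G ∈ M n, ∃ G' ∈ R, Nonempty (G ≃g G')) :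
    ∃ (K : ℝ) (n₀ : ℕ), 0 < K ∧
      ∀ n : ℕ, n₀ ≤ n → (((MonClosure M) n).ncard : ℝ) ≤ (2 : ℝ) ^ (K * n * f n) := by
  classical
  obtain ⟨⟨hδ0, hδ1⟩, hC, hs2, hf0, hfmono, hgrow, hsub⟩ := hf
  refine ⟨3 * c + C + 6, max 2 ⌈s⌉₊, by linarith, ?_⟩
  intro n hn
  -- basic numeric facts
  have hn2 : 2 ≤ n := le_trans (le_max_left _ _) hn
  have hns : s ≤ (n : ℝ) := by
    have h1 : ⌈s⌉₊ ≤ n := le_trans (le_max_right _ _) hn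
    calc s ≤ ⌈s⌉₊ := Nat.le_ceil s
    _ ≤ n := by exact_mod_cast h1
  have hn0 : (0 : ℝ) < n := by
    have : (2:ℝ) ≤ n := by exact_mod_cast hn2
    linarith
  have hlog1 : 1 ≤ Real.logb 2 n := by
    rw [show (1:ℝ) = Real.logb 2 2 from (Real.logb_self_eq_one (by norm_num)).symm]
    exact Real.logb_le_logb_of_le (by norm_num) (by norm_num) (by exact_mod_cast hn2)
  have hlog0 : 0 < Real.logb 2 n := by linarith
  have hfn1 : 1 ≤ f n := le_trans hlog1 (hgrow n hns).1
  have hnfn1 : 1 ≤ (n : ℝ) * f n := by nlinarith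
  have hnfn0 : 0 ≤ (n : ℝ) * f n := by linarith
  -- representative sets
  set R : (N : ℕ) → Set (SimpleGraph (Fin N)) := fun N => Classical.choose (hcard N) with hR
  have hR1 : ∀ N : ℕ, (R N).ncard ≤ ⌈(2 : ℝ) ^ Real.sqrt ((N : ℝ) * f N)⌉₊ :=
    fun N => (Classical.choose_spec (hcard N)).1
  have hR2 : ∀ N : ℕ, ∀ G ∈ M N, ∃ G' ∈ R N, Nonempty (G ≃g G') :=
    fun N => (Classical.choose_spec (hcard N)).2
  set ℛ : (N : ℕ) → Finset (SimpleGraph (Fin N)) := fun N => (Set.toFinite (R N)).toFinset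
    with hℛ
  -- edge thresholds
  set m₁ : ℕ := ⌊c * n * f n / Real.logb 2 n⌋₊ with hm₁
  set m₂ : ℕ := ⌊c * n * f n⌋₊ with hm₂
  -- the two covering families
  set 𝒜 : Set (SimpleGraph (Fin n)) := {H | H.edgeSet.ncard ≤ m₁} with h𝒜
  set ℬ : Set (SimpleGraph (Fin n)) :=
    ⋃ N ∈ Finset.Ico n (n ^ 2), ⋃ G' ∈ ℛ N, ⋃ φ ∈ (Finset.univ : Finset (Fin n ↪ Fin N)),
      {H : SimpleGraph (Fin n) | H ≤ G'.comap φ ∧ (G'.comap φ).edgeSet.ncard ≤ m₂} with hℬ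
  -- coverage
  have hcover : MonClosure M n ⊆ 𝒜 ∪ ℬ := by
    rintro H ⟨N, G, hG, φ, hφ⟩
    have hnN : n ≤ N := by simpa using Fintype.card_le_of_embedding φ
    have hcardA : (Finset.univ.map φ).card = n := by simp
    have hA := hgood N G hG (Finset.univ.map φ) (by rw [hcardA]; exact hn2)
    rw [hcardA] at hA
    have h1 : (G.comap φ).edgeSet.ncard ≤ edgesWithin G (Finset.univ.map φ) :=
      edge_count_le _ _ φ (fun u v h => h)
    have h0 : H.edgeSet.ncard ≤ edgesWithin G (Finset.univ.map φ) :=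
      edge_count_le _ _ φ hφ
    by_cases hN : N < n ^ 2
    · right
      obtain ⟨G', hG', ⟨ψ⟩⟩ := hR2 N G hG
      refine Set.mem_biUnion (Finset.mem_Ico.mpr ⟨hnN, hN⟩) ?_
      refine Set.mem_biUnion (show G' ∈ ℛ N from (Set.Finite.mem_toFinset _).mpr hG') ?_
      refine Set.mem_biUnion (Finset.mem_univ (φ.trans ψ.toEquiv.toEmbedding)) ?_
      have hEq : G'.comap (φ.trans ψ.toEquiv.toEmbedding) = G.comap φ := by
        ext u v
        simp only [SimpleGraph.comap_adj, Function.Embedding.trans_apply,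
          Equiv.coe_toEmbedding]
        exact ψ.map_adj_iff
      constructor
      · intro u v huv
        simp only [SimpleGraph.comap_adj, Function.Embedding.trans_apply,
          Equiv.coe_toEmbedding]
        exact ψ.map_adj_iff.mpr (hφ u v huv)
      · rw [hEq]
        have hsqrt : Real.sqrt N < (n : ℝ) := by
          calc Real.sqrt N < Real.sqrt ((n : ℝ) ^ 2) := by
                apply Real.sqrt_lt_sqrt (by positivity)
                exact_mod_cast hN
          _ = n := Real.sqrt_sq (le_of_lt hn0)
        have h2 := hA.2 hsqrt
        simp only at h2
        apply Nat.le_floor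
        calc ((G.comap φ).edgeSet.ncard : ℝ) ≤ edgesWithin G (Finset.univ.map φ) := by
              exact_mod_cast h1
        _ ≤ (n : ℝ) * (c * f n) := h2
        _ = c * n * f n := by ring
    · left
      have hsqrt : (n : ℝ) ≤ Real.sqrt N := by
        rw [Real.le_sqrt (le_of_lt hn0) (by positivity)]
        push_cast
        exact_mod_cast le_of_not_gt hN
      have h2 := hA.1 hsqrt
      simp only at h2
      show H.edgeSet.ncard ≤ m₁
      apply Nat.le_floor
      calc (H.edgeSet.ncard : ℝ) ≤ edgesWithin G (Finset.univ.map φ) := by exact_mod_cast h0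
      _ ≤ (n : ℝ) * (c * f n) / Real.logb 2 n := h2
      _ = c * n * f n / Real.logb 2 n := by ring_nf
  -- counting 𝒜
  have hAcount : 𝒜.ncard ≤ (m₁ + 1) * (n ^ 2) ^ m₁ := ncard_sparse_le n m₁ (by omega)
  -- counting ℬ
  have hBcount : ℬ.ncard ≤
      ∑ N ∈ Finset.Ico n (n ^ 2), (ℛ N).card * ((n ^ 2) ^ n * 2 ^ m₂) := by
    refine le_trans (ncard_biUnion_le' _ _) (Finset.sum_le_sum ?_)
    intro N hN
    refine le_trans (ncard_biUnion_le' _ _) ?_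
    have hinner : ∀ G' : SimpleGraph (Fin N),
        (⋃ φ ∈ (Finset.univ : Finset (Fin n ↪ Fin N)),
          {H : SimpleGraph (Fin n) | H ≤ G'.comap φ ∧
            (G'.comap φ).edgeSet.ncard ≤ m₂}).ncard ≤ (n ^ 2) ^ n * 2 ^ m₂ := by
      intro G'
      refine le_trans (ncard_biUnion_le' _ _) ?_
      have hφbound : ∀ φ : Fin n ↪ Fin N,
          {H : SimpleGraph (Fin n) | H ≤ G'.comap φ ∧
            (G'.comap φ).edgeSet.ncard ≤ m₂}.ncard ≤ 2 ^ m₂ := by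
        intro φ
        by_cases hP : (G'.comap φ).edgeSet.ncard ≤ m₂
        · calc {H : SimpleGraph (Fin n) | H ≤ G'.comap φ ∧
                (G'.comap φ).edgeSet.ncard ≤ m₂}.ncard
              ≤ {H : SimpleGraph (Fin n) | H ≤ G'.comap φ}.ncard := by
                apply Set.ncard_le_ncard _ (Set.toFinite _)
                intro H hH; exact hH.1
          _ ≤ 2 ^ (G'.comap φ).edgeSet.ncard := ncard_subgraphs_le _
          _ ≤ 2 ^ m₂ := Nat.pow_le_pow_right (by norm_num) hP
        · have : {H : SimpleGraph (Fin n) | H ≤ G'.comap φ ∧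
              (G'.comap φ).edgeSet.ncard ≤ m₂} = ∅ := by
            ext H; simp only [Set.mem_setOf_eq, Set.mem_empty_iff_false, iff_false]
            intro h; exact hP h.2
          rw [this]; simp
      calc ∑ φ ∈ (Finset.univ : Finset (Fin n ↪ Fin N)),
            {H : SimpleGraph (Fin n) | H ≤ G'.comap φ ∧
              (G'.comap φ).edgeSet.ncard ≤ m₂}.ncard
          ≤ ∑ _φ ∈ (Finset.univ : Finset (Fin n ↪ Fin N)), 2 ^ m₂ :=
            Finset.sum_le_sum (fun φ _ => hφbound φ)
        _ = Fintype.card (Fin n ↪ Fin N) * 2 ^ m₂ := by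
            rw [Finset.sum_const, Finset.card_univ, smul_eq_mul]
        _ ≤ (n ^ 2) ^ n * 2 ^ m₂ := by
            apply Nat.mul_le_mul_right
            rw [Fintype.card_embedding_eq, Fintype.card_fin, Fintype.card_fin]
            calc N.descFactorial n ≤ N ^ n := Nat.descFactorial_le_pow _ _
            _ ≤ (n ^ 2) ^ n := Nat.pow_le_pow_left (le_of_lt (Finset.mem_Ico.mp hN).2) n
    calc ∑ G' ∈ ℛ N, (⋃ φ ∈ (Finset.univ : Finset (Fin n ↪ Fin N)),
          {H : SimpleGraph (Fin n) | H ≤ G'.comap φ ∧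
            (G'.comap φ).edgeSet.ncard ≤ m₂}).ncard
        ≤ ∑ _G' ∈ ℛ N, (n ^ 2) ^ n * 2 ^ m₂ := Finset.sum_le_sum (fun G' _ => hinner G')
      _ = (ℛ N).card * ((n ^ 2) ^ n * 2 ^ m₂) := by
          rw [Finset.sum_const, smul_eq_mul]
  -- pass to the reals
  set L : ℝ := Real.logb 2 n with hL
  set F : ℝ := f n with hF
  have hnr : (n : ℝ) = (2 : ℝ) ^ L := (Real.rpow_logb two_pos (by norm_num) hn0).symm
  have hpow : ∀ k : ℕ, ((n : ℝ)) ^ k = (2 : ℝ) ^ (L * k) := by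
    intro k
    rw [hnr, ← Real.rpow_natCast ((2:ℝ) ^ L) k, ← Real.rpow_mul (by norm_num)]
  have hLF : L ≤ F := (hgrow n hns).1
  have hcnF0 : 0 ≤ c * ((n:ℝ) * F) := by positivity
  have hm₁le : (m₁ : ℝ) ≤ c * n * F / L := Nat.floor_le (by positivity)
  have hm₂le : (m₂ : ℝ) ≤ c * n * F := Nat.floor_le (by positivity)
  have hm₁le' : (m₁ : ℝ) ≤ c * n * F := by
    refine hm₁le.trans ?_
    rw [div_le_iff₀ hlog0]
    nlinarith
  have hLm₁ : L * (m₁ : ℝ) ≤ c * n * F := by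
    have h := mul_le_mul_of_nonneg_left hm₁le (le_of_lt hlog0)
    rwa [mul_div_cancel₀ _ (ne_of_gt hlog0)] at h
  -- real bound for 𝒜
  have hAreal : (𝒜.ncard : ℝ) ≤ (2 : ℝ) ^ ((3 * c + 1) * ((n:ℝ) * F)) := by
    have hc1 : (𝒜.ncard : ℝ) ≤ ((m₁ + 1) * (n ^ 2) ^ m₁ : ℕ) := by exact_mod_cast hAcount
    have hc2 : (((m₁ + 1) * (n ^ 2) ^ m₁ : ℕ) : ℝ) = ((m₁ : ℝ) + 1) * ((n:ℝ)) ^ (2 * m₁) := by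
      push_cast
      ring
    have hc3 : ((m₁ : ℝ) + 1) ≤ (2 : ℝ) ^ ((m₁ : ℝ) + 1) := by
      have h := (Nat.lt_two_pow_self (n := m₁ + 1)).le
      have h' : ((m₁ + 1 : ℕ) : ℝ) ≤ ((2 ^ (m₁ + 1) : ℕ) : ℝ) := by exact_mod_cast h
      push_cast at h'
      calc ((m₁ : ℝ) + 1) ≤ (2:ℝ) ^ (m₁ + 1 : ℕ) := h'
      _ = (2:ℝ) ^ (((m₁ + 1 : ℕ) : ℝ)) := by
          rw [Real.rpow_natCast]
      _ = (2:ℝ) ^ ((m₁ : ℝ) + 1) := by push_cast; ring_nf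
    calc (𝒜.ncard : ℝ) ≤ ((m₁ : ℝ) + 1) * ((n:ℝ)) ^ (2 * m₁) := by rw [← hc2]; exact hc1
    _ ≤ (2 : ℝ) ^ ((m₁ : ℝ) + 1) * (2 : ℝ) ^ (L * (2 * m₁ : ℕ)) := by
        rw [hpow (2 * m₁)]
        apply mul_le_mul_of_nonneg_right hc3 (by positivity)
    _ = (2 : ℝ) ^ (((m₁ : ℝ) + 1) + L * (2 * m₁ : ℕ)) := (Real.rpow_add two_pos _ _).symm
    _ ≤ (2 : ℝ) ^ ((3 * c + 1) * ((n:ℝ) * F)) := by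
        apply (Real.rpow_le_rpow_left_iff (by norm_num)).mpr
        push_cast
        nlinarith [hm₁le', hLm₁, hnfn1]
  -- real bound for ℬ
  have hBN : ∀ N ∈ Finset.Ico n (n ^ 2),
      (((ℛ N).card * ((n ^ 2) ^ n * 2 ^ m₂) : ℕ) : ℝ) ≤
        (2 : ℝ) ^ ((C + c + 3) * ((n:ℝ) * F)) := by
    intro N hN
    obtain ⟨hN1, hN2⟩ := Finset.mem_Ico.mp hN
    have hN0 : (0:ℝ) ≤ (N:ℝ) := Nat.cast_nonneg N
    have hNn2 : (N : ℝ) ≤ (n:ℝ) * (n:ℝ) := by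
      have : (N : ℝ) ≤ ((n ^ 2 : ℕ) : ℝ) := by exact_mod_cast le_of_lt hN2
      calc (N:ℝ) ≤ ((n ^ 2 : ℕ) : ℝ) := this
      _ = (n:ℝ) * (n:ℝ) := by push_cast; ring
    -- bound on the number of representatives
    have hRcard : ((ℛ N).card : ℝ) ≤ (2:ℝ) ^ ((C + 1) * ((n:ℝ) * F)) := by
      have he1 : (ℛ N).card = (R N).ncard := ((R N).ncard_eq_toFinset_card _).symm
      have he2 : ((ℛ N).card : ℝ) ≤ (⌈(2 : ℝ) ^ Real.sqrt ((N : ℝ) * f N)⌉₊ : ℝ) := by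
        rw [he1]; exact_mod_cast hR1 N
      have hx0 : (0:ℝ) ≤ (2 : ℝ) ^ Real.sqrt ((N : ℝ) * f N) := by positivity
      have hx1 : (1:ℝ) ≤ (2 : ℝ) ^ Real.sqrt ((N : ℝ) * f N) :=
        Real.one_le_rpow (by norm_num) (Real.sqrt_nonneg _)
      have hsqrtle : Real.sqrt ((N : ℝ) * f N) ≤ C * ((n:ℝ) * F) := by
        have hfN0 : 0 ≤ f N := hf0 N hN0
        have hfN : f N ≤ C * F * F := by
          calc f N ≤ f ((n:ℝ) * (n:ℝ)) := hfmono _ _ hN0 hNn2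
          _ ≤ C * F * F := hsub n n hns hns
        have harg : (N : ℝ) * f N ≤ C * ((n:ℝ) * F) ^ 2 := by nlinarith
        calc Real.sqrt ((N : ℝ) * f N) ≤ Real.sqrt (C * ((n:ℝ) * F) ^ 2) :=
              Real.sqrt_le_sqrt harg
        _ = Real.sqrt C * ((n:ℝ) * F) := by
            rw [Real.sqrt_mul (by linarith) _, Real.sqrt_sq (by positivity)]
        _ ≤ C * ((n:ℝ) * F) := by
            have : Real.sqrt C ≤ C := (Real.sqrt_le_left (by linarith)).mpr (by nlinarith)
            nlinarith [Real.sqrt_nonneg C]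
      calc ((ℛ N).card : ℝ) ≤ (⌈(2 : ℝ) ^ Real.sqrt ((N : ℝ) * f N)⌉₊ : ℝ) := he2
      _ ≤ (2 : ℝ) ^ Real.sqrt ((N : ℝ) * f N) + 1 := (Nat.ceil_lt_add_one hx0).le
      _ ≤ (2 : ℝ) ^ Real.sqrt ((N : ℝ) * f N) * 2 := by linarith
      _ = (2 : ℝ) ^ (Real.sqrt ((N : ℝ) * f N) + 1) := by
          rw [Real.rpow_add two_pos, Real.rpow_one]
      _ ≤ (2 : ℝ) ^ ((C + 1) * ((n:ℝ) * F)) := by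
          apply (Real.rpow_le_rpow_left_iff (by norm_num)).mpr
          nlinarith
    have hEmb : (((n ^ 2) ^ n : ℕ) : ℝ) ≤ (2:ℝ) ^ (2 * ((n:ℝ) * F)) := by
      have : (((n ^ 2) ^ n : ℕ) : ℝ) = ((n:ℝ)) ^ (2 * n) := by push_cast; ring
      rw [this, hpow (2 * n)]
      apply (Real.rpow_le_rpow_left_iff (by norm_num)).mpr
      push_cast
      nlinarith
    have hm2r : (((2 : ℕ) ^ m₂ : ℕ) : ℝ) ≤ (2:ℝ) ^ (c * ((n:ℝ) * F)) := by
      have : (((2 : ℕ) ^ m₂ : ℕ) : ℝ) = (2:ℝ) ^ ((m₂ : ℕ) : ℝ) := by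
        rw [Real.rpow_natCast]; push_cast; ring
      rw [this]
      apply (Real.rpow_le_rpow_left_iff (by norm_num)).mpr
      calc ((m₂ : ℕ) : ℝ) ≤ c * n * F := hm₂le
      _ = c * ((n:ℝ) * F) := by ring
    calc (((ℛ N).card * ((n ^ 2) ^ n * 2 ^ m₂) : ℕ) : ℝ)
        = ((ℛ N).card : ℝ) * ((((n ^ 2) ^ n : ℕ) : ℝ) * (((2:ℕ) ^ m₂ : ℕ) : ℝ)) := by
          push_cast; ring
      _ ≤ (2:ℝ) ^ ((C + 1) * ((n:ℝ) * F)) *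
            ((2:ℝ) ^ (2 * ((n:ℝ) * F)) * (2:ℝ) ^ (c * ((n:ℝ) * F))) := by
          apply mul_le_mul hRcard ?_ (by positivity) (by positivity)
          apply mul_le_mul hEmb hm2r (by positivity) (by positivity)
      _ = (2:ℝ) ^ ((C + 1) * ((n:ℝ) * F) + (2 * ((n:ℝ) * F) + c * ((n:ℝ) * F))) := by
          rw [Real.rpow_add two_pos, Real.rpow_add two_pos]
      _ ≤ (2:ℝ) ^ ((C + c + 3) * ((n:ℝ) * F)) := by
          apply (Real.rpow_le_rpow_left_iff (by norm_num)).mpr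
          nlinarith
  have hBreal : (ℬ.ncard : ℝ) ≤ (2:ℝ) ^ ((C + c + 5) * ((n:ℝ) * F)) := by
    have hc1 : (ℬ.ncard : ℝ) ≤
        ∑ N ∈ Finset.Ico n (n ^ 2), (((ℛ N).card * ((n ^ 2) ^ n * 2 ^ m₂) : ℕ) : ℝ) := by
      rw [← Nat.cast_sum]
      exact_mod_cast hBcount
    have hc2 : ∑ N ∈ Finset.Ico n (n ^ 2), (((ℛ N).card * ((n ^ 2) ^ n * 2 ^ m₂) : ℕ) : ℝ) ≤
        (Finset.Ico n (n ^ 2)).card • ((2:ℝ) ^ ((C + c + 3) * ((n:ℝ) * F))) :=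
      Finset.sum_le_card_nsmul _ _ _ hBN
    have hc3 : ((Finset.Ico n (n ^ 2)).card : ℝ) ≤ (2:ℝ) ^ (2 * ((n:ℝ) * F)) := by
      rw [Nat.card_Ico]
      calc ((n ^ 2 - n : ℕ) : ℝ) ≤ ((n ^ 2 : ℕ) : ℝ) := by
            exact_mod_cast Nat.sub_le _ _
      _ = ((n:ℝ)) ^ 2 := by push_cast; ring
      _ = (2:ℝ) ^ (L * (2:ℕ)) := hpow 2
      _ ≤ (2:ℝ) ^ (2 * ((n:ℝ) * F)) := by
          apply (Real.rpow_le_rpow_left_iff (by norm_num)).mpr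
          push_cast
          nlinarith
    calc (ℬ.ncard : ℝ) ≤
        (Finset.Ico n (n ^ 2)).card • ((2:ℝ) ^ ((C + c + 3) * ((n:ℝ) * F))) :=
          hc1.trans hc2
    _ = ((Finset.Ico n (n ^ 2)).card : ℝ) * (2:ℝ) ^ ((C + c + 3) * ((n:ℝ) * F)) := by
        rw [nsmul_eq_mul]
    _ ≤ (2:ℝ) ^ (2 * ((n:ℝ) * F)) * (2:ℝ) ^ ((C + c + 3) * ((n:ℝ) * F)) :=
        mul_le_mul_of_nonneg_right hc3 (by positivity)
    _ = (2:ℝ) ^ (2 * ((n:ℝ) * F) + (C + c + 3) * ((n:ℝ) * F)) :=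
        (Real.rpow_add two_pos _ _).symm
    _ ≤ (2:ℝ) ^ ((C + c + 5) * ((n:ℝ) * F)) := by
        apply (Real.rpow_le_rpow_left_iff (by norm_num)).mpr
        nlinarith
  -- put everything together
  have hmain : ((MonClosure M n).ncard : ℝ) ≤ (𝒜.ncard : ℝ) + (ℬ.ncard : ℝ) := by
    have h1 : (MonClosure M n).ncard ≤ (𝒜 ∪ ℬ).ncard :=
      Set.ncard_le_ncard hcover (Set.toFinite _)
    have h2 := Set.ncard_union_le 𝒜 ℬ
    exact_mod_cast h1.trans h2
  calc ((MonClosure M n).ncard : ℝ) ≤ (𝒜.ncard : ℝ) + (ℬ.ncard : ℝ) := hmain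
  _ ≤ (2 : ℝ) ^ ((3 * c + 1) * ((n:ℝ) * F)) + (2:ℝ) ^ ((C + c + 5) * ((n:ℝ) * F)) :=
      add_le_add hAreal hBreal
  _ ≤ (2 : ℝ) ^ ((3 * c + C + 5) * ((n:ℝ) * F)) + (2:ℝ) ^ ((3 * c + C + 5) * ((n:ℝ) * F)) := by
      apply add_le_add <;>
        · apply (Real.rpow_le_rpow_left_iff (by norm_num)).mpr
          nlinarith
  _ = (2 : ℝ) ^ ((3 * c + C + 5) * ((n:ℝ) * F) + 1) := by
      rw [Real.rpow_add two_pos, Real.rpow_one]; ring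
  _ ≤ (2 : ℝ) ^ ((3 * c + C + 6) * (n:ℝ) * F) := by
      apply (Real.rpow_le_rpow_left_iff (by norm_num)).mpr
      nlinarith
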